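/- arXiv:2312.13757 — 3 statements merged into one kernel-verified Lean document; each statement's English description precedes it below -/
import Mathlib

section
/- In the structure M of pairs (p,q) with p ∈ ℚ_{≥0}, q ∈ ℤ, q ∈ ℕ when p = 0, ordered lexicographically, for every n ≥ 2 and every element x ∈ M there exists r ∈ {0, 1, ..., n-1} and u ∈ M with x = n·u + r (where n·u denotes u added to itself n times); i.e., M satisfies the division-with-remainder schema of Presburger arithmetic. -/
/-- The nonstandard model: pairs `(p, q)` with `p : ℚ`, `p ≥ 0`, `q : ℤ`,
and `q ≥ 0` (i.e. `q ∈ ℕ`) whenever `p = 0`. -/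
def M : Type := {x : ℚ × ℤ // 0 ≤ x.1 ∧ (x.1 = 0 → 0 ≤ x.2)}

/-- Componentwise addition on `M`. -/
instance : Add M :=
  ⟨fun x y => ⟨(x.1.1 + y.1.1, x.1.2 + y.1.2),
    add_nonneg x.2.1 y.2.1,
    fun h => by
      have h1 : x.1.1 = 0 ∧ y.1.1 = 0 :=
        (add_eq_zero_iff_of_nonneg x.2.1 y.2.1).mp h
      exact add_nonneg (x.2.2 h1.1) (y.2.2 h1.2)⟩⟩

instance : Zero M := ⟨⟨(0, 0), by norm_num⟩⟩

/-- The embedding of `ℕ` into `M`, `n ↦ (0, n)`. -/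
def natM (n : ℕ) : M := ⟨((0 : ℚ), (n : ℤ)), le_refl 0, fun _ => Int.natCast_nonneg n⟩

/-- `n`-fold repeated addition: `smulM n x = x + ⋯ + x` (`n` times). -/
def smulM (n : ℕ) (x : M) : M := Nat.rec 0 (fun _ ih => ih + x) n

/-- Lexicographic order on `M`. -/
instance : LT M := ⟨fun x y => x.1.1 < y.1.1 ∨ (x.1.1 = y.1.1 ∧ x.1.2 < y.1.2)⟩

lemma smulM_val (n : ℕ) (x : M) :
    (smulM n x).1 = ((n : ℚ) * x.1.1, (n : ℤ) * x.1.2) := by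
  induction n with
  | zero => simp [smulM]; rfl
  | succ k ih =>
      show ((smulM k x + x).1) = _
      have : (smulM k x + x).1 = ((smulM k x).1.1 + x.1.1, (smulM k x).1.2 + x.1.2) := rfl
      rw [this, ih]
      push_cast
      ring_nf

/-- Division with remainder in `M`: for every `n ≥ 2` and `x ∈ M` there are
`u ∈ M` and `r < n` with `x = n·u + r`. -/
theorem M_div_with_remainder (n : ℕ) (hn : 2 ≤ n) (x : M) :
    ∃ (u : M) (r : ℕ), r < n ∧ x = smulM n u + natM r := by
  obtain ⟨⟨p, q⟩, hp, hq⟩ := x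
  have hn0 : (0:ℤ) < n := by positivity
  set k := q / (n : ℤ) with hk
  set r := (q % (n : ℤ)).toNat with hr
  have hrlt : (q % (n : ℤ)) < n := Int.emod_lt_of_pos q hn0
  have hrnn : 0 ≤ q % (n : ℤ) := Int.emod_nonneg q (by positivity)
  have hnq : (0:ℚ) < n := by positivity
  have hu2 : (p / n, k).1 = 0 → 0 ≤ (p / n, k).2 := by
    intro h
    have hp0 : p = 0 := by
      field_simp at h
      simpa using h
    exact Int.ediv_nonneg (hq hp0) hn0.le
  set u : M := ⟨(p / n, k), div_nonneg hp hnq.le, hu2⟩ with hu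
  refine ⟨u, r, ?_, ?_⟩
  · exact_mod_cast (Int.toNat_lt' (n := n) (by omega)).mpr hrlt
  · apply Subtype.ext
    show (p, q) = ((smulM n u + natM r).1.1, (smulM n u + natM r).1.2)
    have h1 : (smulM n u + natM r).1.1 = (n:ℚ) * (p / n) + 0 := by
      rw [show (smulM n u + natM r).1.1 = (smulM n u).1.1 + (natM r).1.1 from rfl, smulM_val]; rfl
    have h2 : (smulM n u + natM r).1.2 = (n:ℤ) * k + (r:ℤ) := by
      rw [show (smulM n u + natM r).1.2 = (smulM n u).1.2 + (natM r).1.2 from rfl, smulM_val]; rfl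
    rw [Prod.ext_iff]
    constructor
    · rw [h1]
      field_simp
      simp
    · rw [h2, hr, Int.toNat_of_nonneg hrnn, hk]
      exact (Int.mul_ediv_add_emod q n).symm
end

section
/- There is no function V : M → M on the nonstandard model M = {(p,q) : p ∈ ℚ_{≥0}, q ∈ ℤ, q ∈ ℕ if p = 0} (with componentwise addition) such that V satisfies: (a) V(x) = x holds for some x with nonzero first component, and (b) every x with V(x) = x and x ≠ 0 is not divisible by 3 in M, and (c) every x with V(x) = x and x ≠ 0 is divisible by 2 in M arbitrarily often (i.e., for every k there is y with 2^k · y = x). -/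
/-- There is no function `V : M → M` making `M` a model of the `V₂`-theorems
of Büchi arithmetic: (a) some `x` in a nonstandard galaxy satisfies `V x = x`;
(b) no nonzero fixed point of `V` is divisible by `3`; (c) every nonzero fixed
point of `V` is divisible by every power of `2`. -/
theorem no_V2_on_M :
    ¬ ∃ V : M → M,
      (∃ x : M, V x = x ∧ x.1.1 ≠ 0) ∧
      (∀ x : M, V x = x → x ≠ 0 → ¬ ∃ y : M, smulM 3 y = x) ∧
      (∀ x : M, V x = x → x ≠ 0 → ∀ k : ℕ, ∃ y : M, smulM (2 ^ k) y = x) := by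
  rintro ⟨V, ⟨x, hVx, hp⟩, hb, hc⟩
  have hx0 : x ≠ 0 := by
    intro h; apply hp; rw [h]; rfl
  -- x.1.2 divisible by 2^k for all k, hence zero
  have hq : x.1.2 = 0 := by
    by_contra hq
    obtain ⟨k, hk⟩ := pow_unbounded_of_one_lt (x.1.2.natAbs : ℤ) (by norm_num : (1:ℤ) < 2)
    obtain ⟨y, hy⟩ := hc x hVx hx0 k
    have h2 : ((2:ℤ) ^ k) ∣ x.1.2 := by
      refine ⟨y.1.2, ?_⟩
      have := congrArg (fun z : M => z.1.2) hy
      simpa [smulM_val] using this.symm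
    have := Int.le_of_dvd (by positivity) ((dvd_abs _ _).mpr h2)
    rw [Int.abs_eq_natAbs] at this
    omega
  -- but then x is divisible by 3
  apply hb x hVx hx0
  refine ⟨⟨(x.1.1 / 3, 0), ?_, fun _ => le_refl 0⟩, ?_⟩
  · exact div_nonneg x.2.1 (by norm_num)
  · apply Subtype.ext
    refine (smulM_val 3 _).trans ?_
    rw [Prod.ext_iff]
    constructor
    · show (3:ℚ) * _ = _; ring
    · simpa using hq.symm
end

section
/- For every element (p, q) of M with p > 0 and q ≠ 0, there are only finitely many k ∈ ℕ such that 2^k divides (p, q) in M; equivalently, (p,q) is divisible by 2^k in M iff 2^k divides q in ℤ. -/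
lemma smulM_spec (n : ℕ) (y : M) :
    (smulM n y).1.1 = n * y.1.1 ∧ (smulM n y).1.2 = n * y.1.2 := by
  induction n with
  | zero => simp [smulM]; constructor <;> rfl
  | succ m ih =>
    have : smulM (m+1) y = smulM m y + y := rfl
    rw [this]
    constructor
    · show (smulM m y).1.1 + y.1.1 = _
      rw [ih.1]; push_cast; ring
    · show (smulM m y).1.2 + y.1.2 = _
      rw [ih.2]; push_cast; ring

theorem M_pow_two_dvd (x : M) (hp : 0 < x.1.1) (hq : x.1.2 ≠ 0) :
    (∀ k : ℕ, (∃ y : M, smulM (2 ^ k) y = x) ↔ ((2 : ℤ) ^ k ∣ x.1.2)) ∧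
    {k : ℕ | ∃ y : M, smulM (2 ^ k) y = x}.Finite := by
  have key : ∀ k : ℕ, (∃ y : M, smulM (2 ^ k) y = x) ↔ ((2 : ℤ) ^ k ∣ x.1.2) := by
    intro k
    constructor
    · rintro ⟨y, rfl⟩
      rw [(smulM_spec (2^k) y).2]
      exact Dvd.intro _ (by push_cast; ring)
    · rintro ⟨c, hc⟩
      have hpk : (0:ℚ) < x.1.1 / 2 ^ k := by positivity
      refine ⟨⟨(x.1.1 / 2 ^ k, c), le_of_lt hpk, fun h => absurd h (ne_of_gt hpk)⟩, ?_⟩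
      apply Subtype.ext
      apply Prod.ext
      · refine (smulM_spec (2^k) _).1.trans ?_
        show ((2^k : ℕ) : ℚ) * (x.1.1 / 2^k) = x.1.1
        push_cast
        field_simp
      · refine (smulM_spec (2^k) _).2.trans ?_
        show ((2^k : ℕ) : ℤ) * c = x.1.2
        push_cast
        exact hc.symm
  refine ⟨key, ?_⟩
  apply Set.Finite.subset (Set.finite_Iic x.1.2.natAbs)
  intro k hk
  have hdvd := (key k).mp hk
  have h1 : (2:ℤ)^k ≤ |x.1.2| := Int.le_of_dvd (abs_pos.mpr hq) ((dvd_abs _ _).mpr hdvd)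
  have h2 : (k:ℤ) < 2^k := by exact_mod_cast Nat.lt_two_pow_self (n := k)
  have : |x.1.2| = (x.1.2.natAbs : ℤ) := (Int.abs_eq_natAbs _)
  simp only [Set.mem_Iic]
  omega
end
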